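/- Let Ω ⊂ ℝⁿ be a bounded open set, T > 0, g : (ℝⁿ ∖ Ω) × [0,T] → ℝ and u₀ : Ω → ℝ. Suppose ṽ : ℝⁿ × [0,T] → ℝ is bounded and continuous, continuously differentiable in t, with ṽ(·,t) ∈ C²(ℝⁿ) having α-Hölder second derivatives with a constant H uniform in t, and that ṽ solves the heat-type equation ∂ₜṽ(x,t) = (C(J)/2) Δṽ(x,t) for x ∈ Ω and t ∈ (0,T], ṽ(x,t) = g(x,t) for x ∉ Ω, and ṽ(x,0) = u₀(x) for x ∈ Ω. For each 0 < ε ≤ 1 let u^ε : ℝⁿ × [0,T] → ℝ be bounded, continuous on cl(Ω) × [0,T], differentiable in t on (0,T] for each x ∈ Ω, and satisfy the rescaled convolution equation ∂ₜu^ε(x,t) = ε^{−2} ∫_{ℝⁿ} J(y)(u^ε(x − εy, t) − u^ε(x,t)) dy for x ∈ Ω and t ∈ (0,T], together with u^ε(x,t) = g(x,t) for x ∉ Ω and u^ε(x,0) = u₀(x) for x ∈ Ω. Then there exists a constant c, independent of ε, such that sup_{(x,t) ∈ Ω × [0,T]} |u^ε(x,t) − ṽ(x,t)| ≤ c ε^α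 for all 0 < ε ≤ 1. (This is the abelian instance of the uniform approximation of the Dirichlet problem for the heat equation by rescaled nonlocal evolution problems described in Section 3 of the paper.) -/

import Mathlib

open MeasureTheory Matrix Set

/-- First partial derivative `∂ᵢ f (x)`. -/
noncomputable def pd1 {n : ℕ} (f : EuclideanSpace ℝ (Fin n) → ℝ)
    (x : EuclideanSpace ℝ (Fin n)) (i : Fin n) : ℝ :=
  fderiv ℝ f x (EuclideanSpace.single i 1)

/-- Second partial derivative `∂ᵢ∂ⱼ f (x)`. -/
noncomputable def pd2 {n : ℕ} (f : EuclideanSpace ℝ (Fin n) → ℝ)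
    (x : EuclideanSpace ℝ (Fin n)) (i j : Fin n) : ℝ :=
  fderiv ℝ (fderiv ℝ f) x (EuclideanSpace.single i 1) (EuclideanSpace.single j 1)

/-- The Laplacian `Δf(x) = ∑ᵢ ∂ᵢ∂ᵢ f(x)`. -/
noncomputable def lap {n : ℕ} (f : EuclideanSpace ℝ (Fin n) → ℝ)
    (x : EuclideanSpace ℝ (Fin n)) : ℝ :=
  ∑ i, pd2 f x i i

/-- The rescaled nonlocal convolution operator
`ℰ_ε u(x) = ε^{−2} ∫ J(y)(u(x − εy) − u(x)) dy`. -/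
noncomputable def Eop {n : ℕ} (J : EuclideanSpace ℝ (Fin n) → ℝ) (ε : ℝ)
    (u : EuclideanSpace ℝ (Fin n) → ℝ) (x : EuclideanSpace ℝ (Fin n)) : ℝ :=
  (ε ^ 2)⁻¹ * ∫ y, J y * (u (x - ε • y) - u x)

lemma bilin_expand {n : ℕ} (B : EuclideanSpace ℝ (Fin n) →L[ℝ] EuclideanSpace ℝ (Fin n) →L[ℝ] ℝ)
    (h : EuclideanSpace ℝ (Fin n)) :
    B h h = ∑ i, ∑ j, h i * h j * B (EuclideanSpace.single i 1) (EuclideanSpace.single j 1) := by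
  have hrep : h = ∑ i, h i • EuclideanSpace.single i 1 := by
    have := (EuclideanSpace.basisFun (Fin n) ℝ).toBasis.sum_repr h
    simpa [EuclideanSpace.basisFun_apply] using this.symm
  have e1 : ∀ (L : EuclideanSpace ℝ (Fin n) →L[ℝ] ℝ), L h = ∑ j, h j * L (EuclideanSpace.single j 1) := by
    intro L
    conv_lhs => rw [hrep]
    rw [map_sum]; simp [smul_eq_mul]
  have e2 : ∀ z, B h z = ∑ i, h i * B (EuclideanSpace.single i 1) z := by
    intro z
    conv_lhs => rw [hrep]
    rw [map_sum]; simp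
  rw [e1 (B h)]
  calc ∑ j, h j * (B h) (EuclideanSpace.single j 1)
      = ∑ j, ∑ i, h j * (h i * B (EuclideanSpace.single i 1) (EuclideanSpace.single j 1)) := by
        refine Finset.sum_congr rfl fun j _ => ?_
        rw [e2, Finset.mul_sum]
    _ = _ := by rw [Finset.sum_comm]; exact Finset.sum_congr rfl fun i _ => Finset.sum_congr rfl fun j _ => by ring

lemma coord_le_norm {n : ℕ} (h : EuclideanSpace ℝ (Fin n)) (i : Fin n) : |h i| ≤ ‖h‖ := by
  rw [EuclideanSpace.norm_eq]
  calc |h i| = Real.sqrt (‖h i‖^2) := by rw [Real.sqrt_sq_eq_abs]; simp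
  _ ≤ _ := Real.sqrt_le_sqrt (Finset.single_le_sum (f := fun j => ‖h j‖^2) (fun j _ => sq_nonneg _) (Finset.mem_univ i))

lemma taylor2 {n : ℕ} {f : EuclideanSpace ℝ (Fin n) → ℝ} (hf : ContDiff ℝ 2 f)
    {H α : ℝ} (hα0 : 0 < α) (hH : 0 ≤ H)
    (hHol : ∀ x y (i j : Fin n), |pd2 f x i j - pd2 f y i j| ≤ H * ‖x - y‖ ^ α)
    (x h : EuclideanSpace ℝ (Fin n)) :
    |f (x + h) - f x - fderiv ℝ f x h
      - (1/2) * ∑ i, ∑ j, h i * h j * pd2 f x i j|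
      ≤ (H * n^2) * (‖h‖^2 * ‖h‖ ^ α) := by
  set A := fderiv ℝ f with hA
  set B := fderiv ℝ A with hB
  set M : ℝ := (H * n^2) * (‖h‖^2 * ‖h‖ ^ α) with hM
  have hfd : Differentiable ℝ f := hf.differentiable (by norm_num)
  have hAc : ContDiff ℝ 1 A := hf.fderiv_right (by norm_num)
  have hAd : Differentiable ℝ A := hAc.differentiable (by norm_num)
  have hline : ∀ s : ℝ, HasDerivAt (fun s : ℝ => x + s • h) h s := by
    intro s
    simpa using ((hasDerivAt_id s).smul_const h).const_add x
  have hd1 : ∀ s : ℝ, HasDerivAt (fun s => f (x + s • h)) (A (x + s • h) h) s := by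
    intro s
    exact ((hfd (x + s • h)).hasFDerivAt).comp_hasDerivAt s (hline s)
  have hd2 : ∀ s : ℝ, HasDerivAt (fun s => A (x + s • h) h) ((B (x + s • h) h) h) s := by
    intro s
    have h1 : HasDerivAt (fun s => A (x + s • h)) (B (x + s • h) h) s :=
      ((hAd (x + s • h)).hasFDerivAt).comp_hasDerivAt s (hline s)
    simpa using h1.clm_apply (hasDerivAt_const s h)
  -- bound on second-derivative variation
  have Hb : ∀ s ∈ Icc (0:ℝ) 1, |(B (x + s • h) h) h - (B x h) h| ≤ M := by
    intro s hs
    rw [bilin_expand, bilin_expand]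
    have hpd : ∀ q (i j : Fin n), (B q) (EuclideanSpace.single i 1) (EuclideanSpace.single j 1) = pd2 f q i j := fun _ _ _ => rfl
    simp only [hpd, ← Finset.sum_sub_distrib]
    have key : ∀ i j : Fin n,
        |h i * h j * pd2 f (x + s • h) i j - h i * h j * pd2 f x i j|
          ≤ ‖h‖ * ‖h‖ * (H * ‖h‖ ^ α) := by
      intro i j
      have h1 : |pd2 f (x + s • h) i j - pd2 f x i j| ≤ H * ‖h‖ ^ α := by
        refine (hHol _ _ i j).trans ?_
        have h2 : ‖x + s • h - x‖ ≤ ‖h‖ := by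
          simp only [add_sub_cancel_left, norm_smul, Real.norm_eq_abs]
          calc |s| * ‖h‖ ≤ 1 * ‖h‖ := by
                apply mul_le_mul_of_nonneg_right _ (norm_nonneg h)
                rw [abs_le]; constructor <;> linarith [hs.1, hs.2]
          _ = ‖h‖ := one_mul _
        exact mul_le_mul_of_nonneg_left
          (Real.rpow_le_rpow (norm_nonneg _) h2 hα0.le) hH
      calc |h i * h j * pd2 f (x + s • h) i j - h i * h j * pd2 f x i j|
          = |h i| * |h j| * |pd2 f (x + s • h) i j - pd2 f x i j| := by
            rw [← abs_mul, ← abs_mul]; ring_nf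
        _ ≤ ‖h‖ * ‖h‖ * (H * ‖h‖ ^ α) := by
            apply mul_le_mul _ h1 (abs_nonneg _) (mul_nonneg (norm_nonneg _) (norm_nonneg _))
            exact mul_le_mul (coord_le_norm h i) (coord_le_norm h j) (abs_nonneg _) (norm_nonneg _)
    calc |∑ i, ∑ j, (h i * h j * pd2 f (x + s • h) i j - h i * h j * pd2 f x i j)|
        ≤ ∑ i : Fin n, ∑ j : Fin n, (‖h‖ * ‖h‖ * (H * ‖h‖ ^ α)) := by
          refine (Finset.abs_sum_le_sum_abs _ _).trans (Finset.sum_le_sum fun i _ => ?_)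
          refine (Finset.abs_sum_le_sum_abs _ _).trans (Finset.sum_le_sum fun j _ => ?_)
          exact key i j
      _ = M := by
          simp [Finset.sum_const, hM]
          ring
  have hM0 : 0 ≤ M := le_trans (abs_nonneg _) (Hb 0 ⟨le_refl 0, zero_le_one⟩)
  set c : ℝ := (B x h) h with hc
  set ψ : ℝ → ℝ := fun s => A (x + s • h) h - A x h - s * c with hψ
  have hψd : ∀ s ∈ Icc (0:ℝ) 1,
      HasDerivWithinAt ψ ((B (x + s • h) h) h - c) (Icc (0:ℝ) 1) s := by
    intro s _
    exact (((hd2 s).sub_const (A x h)).sub (hasDerivAt_mul_const c)).hasDerivWithinAt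
  have hψb : ∀ s ∈ Icc (0:ℝ) 1, ‖ψ s‖ ≤ M := by
    intro s hs
    have := Convex.norm_image_sub_le_of_norm_hasDerivWithin_le hψd
      (fun r hr => by rw [Real.norm_eq_abs]; exact Hb r hr) (convex_Icc 0 1)
      (left_mem_Icc.2 zero_le_one) hs
    have hψ0 : ψ 0 = 0 := by simp [hψ]
    rw [hψ0, sub_zero, sub_zero] at this
    refine this.trans ?_
    calc M * ‖s‖ ≤ M * 1 := by
          apply mul_le_mul_of_nonneg_left _ hM0
          rw [Real.norm_eq_abs, abs_le]; exact ⟨by linarith [hs.1], hs.2⟩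
      _ = M := mul_one M
  set g : ℝ → ℝ := fun s => f (x + s • h) - s * (A x h) - s^2/2 * c with hg
  have hgd : ∀ s ∈ Icc (0:ℝ) 1, HasDerivWithinAt g (ψ s) (Icc (0:ℝ) 1) s := by
    intro s _
    have h2 : HasDerivAt (fun s : ℝ => s^2/2 * c) (s * c) s := by
      have := ((hasDerivAt_pow 2 s).div_const 2).mul_const c
      exact this.congr_deriv (by push_cast; ring)
    exact (((hd1 s).sub (hasDerivAt_mul_const (A x h))).sub h2).hasDerivWithinAt
  have hfin := Convex.norm_image_sub_le_of_norm_hasDerivWithin_le hgd hψb (convex_Icc 0 1)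
    (left_mem_Icc.2 zero_le_one) (right_mem_Icc.2 zero_le_one)
  have hg1 : g 1 - g 0 = f (x + h) - f x - A x h - (1/2) * c := by
    simp [hg, one_smul]
    ring
  rw [hg1] at hfin
  have hcs : c = ∑ i, ∑ j, h i * h j * pd2 f x i j := by
    rw [hc, bilin_expand]
    rfl
  rw [← hcs]
  calc |f (x + h) - f x - A x h - 1/2 * c| = ‖f (x + h) - f x - A x h - 1/2 * c‖ := rfl
    _ ≤ M * ‖(1:ℝ) - 0‖ := hfin
    _ = M := by norm_num

lemma consistency {n : ℕ} {J : EuclideanSpace ℝ (Fin n) → ℝ} (hJint : Integrable J)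
    (hJ0 : ∀ x, 0 ≤ J x) (hJeven : ∀ x, J (-x) = J x)
    {R : ℝ} (hR : 0 < R) (hsupp : tsupport J ⊆ Metric.closedBall 0 R)
    {CJ : ℝ} (hJmom : ∀ i j : Fin n, ∫ x, J x * (x i * x j) = if i = j then CJ else 0)
    {α H : ℝ} (hα0 : 0 < α) (hH : 0 ≤ H)
    {f : EuclideanSpace ℝ (Fin n) → ℝ} (hf : ContDiff ℝ 2 f)
    {Cv : ℝ} (hfb : ∀ z, |f z| ≤ Cv)
    (hHol : ∀ x y (i j : Fin n), |pd2 f x i j - pd2 f y i j| ≤ H * ‖x - y‖ ^ α)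
    {ε : ℝ} (hε0 : 0 < ε) (x : EuclideanSpace ℝ (Fin n)) :
    |Eop J ε f x - CJ/2 * lap f x| ≤ (H * n^2 * (R^2 * R^α) * ∫ y, J y) * ε ^ α := by
  have hεα : (0:ℝ) < ε ^ α := Real.rpow_pos_of_pos hε0 α
  have hRα : (0:ℝ) < R ^ α := Real.rpow_pos_of_pos hR α
  set L : EuclideanSpace ℝ (Fin n) → ℝ := fun y => fderiv ℝ f x (-(ε • y)) with hL
  set Q : EuclideanSpace ℝ (Fin n) → ℝ :=
    fun y => ε^2 * ((1/2) * ∑ i, ∑ j, y i * y j * pd2 f x i j) with hQ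
  set Rm : EuclideanSpace ℝ (Fin n) → ℝ :=
    fun y => f (x - ε • y) - f x - L y - Q y with hRm
  -- Taylor bound
  have hTay : ∀ y, |Rm y| ≤ (H * n^2) * (ε^2 * ‖y‖^2 * (ε ^ α * ‖y‖ ^ α)) := by
    intro y
    have hxy : x - ε • y = x + (-(ε • y)) := by rw [sub_eq_add_neg]
    have hn : ‖(-(ε • y))‖ = ε * ‖y‖ := by
      rw [norm_neg, norm_smul, Real.norm_eq_abs, abs_of_pos hε0]
    have hQe : (1/2) * ∑ i, ∑ j, (-(ε • y)) i * (-(ε • y)) j * pd2 f x i j = Q y := by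
      rw [hQ]
      have : ∀ i j : Fin n, (-(ε • y)) i * (-(ε • y)) j * pd2 f x i j
          = ε^2 * (y i * y j * pd2 f x i j) := by
        intro i j
        have h1 : (-(ε • y)) i = -(ε * y i) := by simp
        have h2 : (-(ε • y)) j = -(ε * y j) := by simp
        rw [h1, h2]; ring
      simp only [this, ← Finset.mul_sum]
      try ring
    have := taylor2 hf hα0 hH hHol x (-(ε • y))
    rw [hQe, ← hxy, hn] at this
    refine this.trans (le_of_eq ?_)
    rw [mul_pow, Real.mul_rpow hε0.le (norm_nonneg y)]
    try ring
  have hsuppb : ∀ y, |J y * Rm y| ≤ ((H * n^2) * (ε^2 * R^2 * (ε ^ α * R ^ α))) * J y := by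
    intro y
    by_cases hy : y ∈ tsupport J
    · have hyR : ‖y‖ ≤ R := by simpa [Metric.mem_closedBall, dist_eq_norm] using hsupp hy
      rw [abs_mul, abs_of_nonneg (hJ0 y), mul_comm]
      apply mul_le_mul_of_nonneg_right _ (hJ0 y)
      refine (hTay y).trans ?_
      have h2 : ‖y‖^2 ≤ R^2 := by nlinarith [norm_nonneg y]
      have hα' : ‖y‖ ^ α ≤ R ^ α := Real.rpow_le_rpow (norm_nonneg y) hyR hα0.le
      have hn2 : (0:ℝ) ≤ H * n^2 := by positivity
      apply mul_le_mul_of_nonneg_left _ hn2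
      have := mul_le_mul h2 (mul_le_mul_of_nonneg_left hα' hεα.le)
        (by positivity) (by positivity)
      nlinarith [sq_nonneg ‖y‖, hεα.le, sq_abs ε]
    · have : J y = 0 := image_eq_zero_of_notMem_tsupport hy
      rw [this]; simp [abs_nonneg]
      try positivity
  -- integrability facts
  have hcontf : Continuous f := hf.continuous
  have hshift : Continuous fun y : EuclideanSpace ℝ (Fin n) => x - ε • y :=
    continuous_const.sub (continuous_id.const_smul ε)
  have hIdiff : Integrable (fun y => J y * (f (x - ε • y) - f x)) := by
    refine Integrable.mono' (hJint.mul_const (2 * Cv))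
      (hJint.aestronglyMeasurable.mul
        (((hcontf.comp hshift).sub continuous_const).aestronglyMeasurable))
      (ae_of_all _ fun y => ?_)
    rw [norm_mul, Real.norm_eq_abs, Real.norm_eq_abs, abs_of_nonneg (hJ0 y)]
    apply mul_le_mul_of_nonneg_left _ (hJ0 y)
    calc |f (x - ε • y) - f x| ≤ |f (x - ε • y)| + |f x| := abs_sub _ _
      _ ≤ Cv + Cv := add_le_add (hfb _) (hfb _)
      _ = 2 * Cv := by ring
  have hIL : Integrable (fun y => J y * L y) := by
    refine Integrable.mono' (hJint.mul_const (‖fderiv ℝ f x‖ * (ε * R)))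
      (hJint.aestronglyMeasurable.mul (((fderiv ℝ f x).continuous.comp
        (continuous_neg.comp (continuous_id.const_smul ε))).aestronglyMeasurable))
      (ae_of_all _ fun y => ?_)
    by_cases hy : y ∈ tsupport J
    · have hyR : ‖y‖ ≤ R := by simpa [Metric.mem_closedBall, dist_eq_norm] using hsupp hy
      rw [norm_mul, Real.norm_eq_abs (J y), abs_of_nonneg (hJ0 y)]
      apply mul_le_mul_of_nonneg_left _ (hJ0 y)
      calc ‖L y‖ ≤ ‖fderiv ℝ f x‖ * ‖(-(ε • y))‖ := (fderiv ℝ f x).le_opNorm _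
        _ = ‖fderiv ℝ f x‖ * (ε * ‖y‖) := by
            rw [norm_neg, norm_smul, Real.norm_eq_abs, abs_of_pos hε0]
        _ ≤ ‖fderiv ℝ f x‖ * (ε * R) := by
            apply mul_le_mul_of_nonneg_left _ (norm_nonneg _)
            exact mul_le_mul_of_nonneg_left hyR hε0.le
    · simp [image_eq_zero_of_notMem_tsupport hy]
  have hbase : ∀ i j : Fin n,
      Integrable (fun y : EuclideanSpace ℝ (Fin n) => J y * (y i * y j)) := by
    intro i j
    refine Integrable.mono' (hJint.mul_const (R * R))
      (hJint.aestronglyMeasurable.mul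
        (((PiLp.continuous_apply 2 _ i).mul (PiLp.continuous_apply 2 _ j)).aestronglyMeasurable))
      (ae_of_all _ fun y => ?_)
    by_cases hy : y ∈ tsupport J
    · have hyR : ‖y‖ ≤ R := by simpa [Metric.mem_closedBall, dist_eq_norm] using hsupp hy
      rw [norm_mul, Real.norm_eq_abs (J y), abs_of_nonneg (hJ0 y)]
      apply mul_le_mul_of_nonneg_left _ (hJ0 y)
      rw [Real.norm_eq_abs, abs_mul]
      exact mul_le_mul ((coord_le_norm y i).trans hyR) ((coord_le_norm y j).trans hyR)
        (abs_nonneg _) hR.le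
    · simp [image_eq_zero_of_notMem_tsupport hy]
      try positivity
  have hQeq : (fun y : EuclideanSpace ℝ (Fin n) => J y * Q y)
      = fun y => ∑ i, ∑ j, (ε^2 * (1/2) * pd2 f x i j) * (J y * (y i * y j)) := by
    funext y
    simp only [hQ, Finset.mul_sum]
    refine Finset.sum_congr rfl fun i _ => Finset.sum_congr rfl fun j _ => by ring
  have hIQ : Integrable (fun y => J y * Q y) := by
    rw [hQeq]
    exact integrable_finset_sum _ fun i _ =>
      integrable_finset_sum _ fun j _ => (hbase i j).const_mul _
  have hIR : Integrable (fun y => J y * Rm y) := by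
    have hRdecomp : (fun y => J y * Rm y)
        = fun y => (J y * (f (x - ε • y) - f x) - J y * L y) - J y * Q y := by
      funext y; simp only [hRm]; ring
    rw [hRdecomp]
    exact (hIdiff.sub hIL).sub hIQ
  have hsplit : ∫ y, J y * (f (x - ε • y) - f x)
      = (∫ y, J y * L y) + (∫ y, J y * Q y) + ∫ y, J y * Rm y := by
    have hdec : (fun y => J y * (f (x - ε • y) - f x))
        = fun y => (J y * L y + J y * Q y) + J y * Rm y := by
      funext y; simp only [hRm]; ring
    have hIL' : Integrable (fun y => J y * L y + J y * Q y) := hIL.add hIQ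
    rw [hdec]
    rw [integral_add hIL' hIR, integral_add hIL hIQ]
  have hL0 : ∫ y, J y * L y = 0 := by
    have hodd : ∀ y, J (-y) * L (-y) = -(J y * L y) := by
      intro y
      rw [hJeven]
      have e1 : L (-y) = fderiv ℝ f x (ε • y) := by
        simp only [hL]; congr 1; simp
      have e2 : L y = -(fderiv ℝ f x (ε • y)) := by
        simp only [hL]
        rw [show (-(ε • y)) = -(ε • y) from rfl, map_neg]
      rw [e1, e2]; ring
    have h1 := integral_neg_eq_self (fun y => J y * L y)
      (volume : Measure (EuclideanSpace ℝ (Fin n)))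
    simp only [hodd] at h1
    rw [integral_neg] at h1
    linarith
  have hQint : ∫ y, J y * Q y = ε^2 * (CJ/2 * lap f x) := by
    rw [hQeq]
    rw [integral_finset_sum _ (fun i _ =>
      integrable_finset_sum _ (fun j _ => (hbase i j).const_mul _))]
    have hin : ∀ i : Fin n,
        (∫ y, ∑ j, (ε^2 * (1/2) * pd2 f x i j) * (J y * (y i * y j)))
        = ∑ j, (ε^2 * (1/2) * pd2 f x i j) * (if i = j then CJ else 0) := by
      intro i
      rw [integral_finset_sum _ (fun j _ => (hbase i j).const_mul _)]
      exact Finset.sum_congr rfl fun j _ => by rw [integral_const_mul, hJmom i j]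
    simp only [hin, mul_ite, mul_zero, Finset.sum_ite_eq, Finset.mem_univ, if_true]
    simp only [lap, Finset.mul_sum]
    refine Finset.sum_congr rfl fun i _ => by ring
  have hRint : |∫ y, J y * Rm y|
      ≤ ((H * n^2) * (ε^2 * R^2 * (ε ^ α * R ^ α))) * ∫ y, J y := by
    have h1 : ‖∫ y, J y * Rm y‖
        ≤ ∫ y, ((H * n^2) * (ε^2 * R^2 * (ε ^ α * R ^ α))) * J y :=
      norm_integral_le_of_norm_le (hJint.const_mul _)
        (ae_of_all _ fun y => by rw [Real.norm_eq_abs]; exact hsuppb y)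
    rw [integral_const_mul] at h1
    rwa [Real.norm_eq_abs] at h1
  have hε2 : (ε:ℝ)^2 ≠ 0 := pow_ne_zero _ hε0.ne'
  have hEop : Eop J ε f x - CJ/2 * lap f x = (ε^2)⁻¹ * ∫ y, J y * Rm y := by
    simp only [Eop]
    rw [hsplit, hL0, hQint]
    field_simp
    ring
  rw [hEop, abs_mul, abs_of_nonneg (inv_nonneg.2 (sq_nonneg ε))]
  calc (ε^2)⁻¹ * |∫ y, J y * Rm y|
      ≤ (ε^2)⁻¹ * (((H * n^2) * (ε^2 * R^2 * (ε ^ α * R ^ α))) * ∫ y, J y) :=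
        mul_le_mul_of_nonneg_left hRint (inv_nonneg.2 (sq_nonneg ε))
    _ = (H * n^2 * (R^2 * R^α) * ∫ y, J y) * ε ^ α := by
        field_simp

lemma oneside {n : ℕ} (J : EuclideanSpace ℝ (Fin n) → ℝ) (hJ0 : ∀ x, 0 ≤ J x)
    (ε : ℝ) (Ω : Set (EuclideanSpace ℝ (Fin n))) (hΩc : IsCompact (closure Ω))
    (T : ℝ) (hT : 0 < T) (K : ℝ) (hK : 0 ≤ K)
    (U V Vt : EuclideanSpace ℝ (Fin n) → ℝ → ℝ)
    (hUcont : ContinuousOn (fun p : EuclideanSpace ℝ (Fin n) × ℝ => U p.1 p.2)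
      (closure Ω ×ˢ Icc (0:ℝ) T))
    (hVcont : Continuous (fun p : EuclideanSpace ℝ (Fin n) × ℝ => V p.1 p.2))
    (hUeq : ∀ x ∈ Ω, ∀ t ∈ Ioc (0:ℝ) T, HasDerivWithinAt (fun s => U x s)
      (Eop J ε (fun y => U y t) x) (Icc (0:ℝ) T) t)
    (hVderiv : ∀ x, ∀ t ∈ Icc (0:ℝ) T,
      HasDerivWithinAt (fun s => V x s) (Vt x t) (Icc (0:ℝ) T) t)
    (hkey : ∀ x ∈ Ω, ∀ t ∈ Ioc (0:ℝ) T, Eop J ε (fun y => V y t) x ≤ Vt x t + K)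
    (hbc : ∀ x ∉ Ω, ∀ t ∈ Icc (0:ℝ) T, U x t = V x t)
    (hic : ∀ x ∈ Ω, U x 0 = V x 0)
    (hUint : ∀ t ∈ Ioc (0:ℝ) T, ∀ x ∈ Ω,
      Integrable (fun y => J y * (U (x - ε • y) t - U x t)))
    (hVint : ∀ t ∈ Ioc (0:ℝ) T, ∀ x ∈ Ω,
      Integrable (fun y => J y * (V (x - ε • y) t - V x t))) :
    ∀ x ∈ Ω, ∀ t ∈ Icc (0:ℝ) T, U x t - V x t ≤ K * T := by
  have hW0 : ∀ z, U z 0 - V z 0 = 0 := by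
    intro z
    by_cases hz : z ∈ Ω
    · rw [hic z hz]; ring
    · rw [hbc z hz 0 (left_mem_Icc.2 hT.le)]; ring
  have main : ∀ δ > (0:ℝ), ∀ s ∈ Icc (0:ℝ) T, ∀ z ∈ closure Ω,
      U z s - V z s < K * s + δ * (1 + s) := by
    intro δ hδ
    by_contra hcon
    push_neg at hcon
    obtain ⟨s₁, hs₁, z₁, hz₁, hge₁⟩ := hcon
    set ψ : ℝ → ℝ := fun s => K * s + δ * (1 + s) with hψdef
    have hψpos : ∀ s, 0 ≤ s → 0 < ψ s := by
      intro s hs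
      simp only [hψdef]
      nlinarith
    have hψcont : Continuous ψ :=
      (continuous_const.mul continuous_id).add
        (continuous_const.mul (continuous_const.add continuous_id))
    have hKc : IsCompact (closure Ω ×ˢ Icc (0:ℝ) T) := hΩc.prod isCompact_Icc
    have hWcont : ContinuousOn
        (fun p : EuclideanSpace ℝ (Fin n) × ℝ => U p.1 p.2 - V p.1 p.2 - ψ p.2)
        (closure Ω ×ˢ Icc (0:ℝ) T) :=
      (hUcont.sub hVcont.continuousOn).sub (hψcont.comp continuous_snd).continuousOn
    set C : Set (EuclideanSpace ℝ (Fin n) × ℝ) :=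
      (closure Ω ×ˢ Icc (0:ℝ) T) ∩
        ((fun p : EuclideanSpace ℝ (Fin n) × ℝ => U p.1 p.2 - V p.1 p.2 - ψ p.2) ⁻¹' Ici 0)
      with hCdef
    have hCclosed : IsClosed C :=
      hWcont.preimage_isClosed_of_isClosed (hKc.isClosed) isClosed_Ici
    have hCcomp : IsCompact C := hKc.of_isClosed_subset hCclosed inter_subset_left
    set S : Set ℝ := Prod.snd '' C with hSdef
    have hScomp : IsCompact S := hCcomp.image continuous_snd
    have hSne : S.Nonempty := by
      refine ⟨s₁, ⟨(z₁, s₁), ⟨⟨hz₁, hs₁⟩, ?_⟩, rfl⟩⟩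
      simp only [mem_preimage, mem_Ici, hψdef]
      linarith
    set t₀ : ℝ := sInf S with ht₀def
    have ht₀S : t₀ ∈ S := hScomp.isClosed.csInf_mem hSne hScomp.bddBelow
    obtain ⟨p₀, hp₀C, hp₀snd⟩ := ht₀S
    obtain ⟨⟨hz₀cl, ht₀Icc'⟩, hp₀W⟩ := hp₀C
    rw [hp₀snd] at ht₀Icc'
    have ht₀Icc : t₀ ∈ Icc (0:ℝ) T := ht₀Icc'
    have hz₀W : 0 ≤ U p₀.1 t₀ - V p₀.1 t₀ - ψ t₀ := by
      have := hp₀W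
      simp only [mem_preimage, mem_Ici] at this
      rwa [hp₀snd] at this
    have ht₀pos : 0 < t₀ := by
      rcases lt_or_eq_of_le ht₀Icc.1 with h | h
      · exact h
      · exfalso
        have h0 : U p₀.1 0 - V p₀.1 0 = 0 := hW0 p₀.1
        rw [← h] at hz₀W
        simp only [hψdef] at hz₀W
        nlinarith
    have hlt : ∀ s ∈ Ico (0:ℝ) t₀, ∀ z ∈ closure Ω, U z s - V z s < ψ s := by
      intro s hs z hz
      by_contra hge
      push_neg at hge
      simp only [hψdef] at hge
      have hsS : s ∈ S := by
        refine ⟨(z, s), ⟨⟨hz, ⟨hs.1, le_trans hs.2.le ht₀Icc.2⟩⟩, ?_⟩, rfl⟩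
        simp only [mem_preimage, mem_Ici, hψdef]
        linarith
      have := csInf_le hScomp.bddBelow hsS
      rw [← ht₀def] at this
      linarith [hs.2]
    -- maximizer of W(·, t₀) over closure Ω
    have hWt₀cont : ContinuousOn (fun z => U z t₀ - V z t₀) (closure Ω) := by
      have h1 : ContinuousOn (fun z => U z t₀) (closure Ω) := by
        have := hUcont.comp
          ((continuous_id.prodMk continuous_const).continuousOn :
            ContinuousOn (fun z : EuclideanSpace ℝ (Fin n) => (z, t₀)) (closure Ω))
          (fun z hz => mk_mem_prod hz ht₀Icc)
        exact this
      exact h1.sub ((hVcont.comp (continuous_id.prodMk continuous_const)).continuousOn)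
    obtain ⟨x₀, hx₀cl, hx₀max⟩ :=
      hΩc.exists_isMaxOn ⟨p₀.1, hz₀cl⟩ hWt₀cont
    have hmax : ∀ z ∈ closure Ω, U z t₀ - V z t₀ ≤ U x₀ t₀ - V x₀ t₀ := fun z hz => hx₀max hz
    have hmψ : ψ t₀ ≤ U x₀ t₀ - V x₀ t₀ := le_trans (by linarith) (hmax p₀.1 hz₀cl)
    have hx₀Ω : x₀ ∈ Ω := by
      by_contra hx₀
      have := hbc x₀ hx₀ t₀ ht₀Icc
      have hp := hψpos t₀ ht₀Icc.1
      rw [this] at hmψ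
      linarith
    have hallW : ∀ z, U z t₀ - V z t₀ ≤ U x₀ t₀ - V x₀ t₀ := by
      intro z
      by_cases hz : z ∈ closure Ω
      · exact hmax z hz
      · have hzΩ : z ∉ Ω := fun h => hz (subset_closure h)
        rw [hbc z hzΩ t₀ ht₀Icc]
        have hp := hψpos t₀ ht₀Icc.1
        linarith
    have ht₀Ioc : t₀ ∈ Ioc (0:ℝ) T := ⟨ht₀pos, ht₀Icc.2⟩
    -- comparison of nonlocal operators at the max point
    have hEle : Eop J ε (fun y => U y t₀) x₀ ≤ Eop J ε (fun y => V y t₀) x₀ := by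
      simp only [Eop]
      apply mul_le_mul_of_nonneg_left _ (inv_nonneg.2 (sq_nonneg ε))
      apply integral_mono (hUint t₀ ht₀Ioc x₀ hx₀Ω) (hVint t₀ ht₀Ioc x₀ hx₀Ω)
      intro y
      apply mul_le_mul_of_nonneg_left _ (hJ0 y)
      have := hallW (x₀ - ε • y)
      linarith
    set d : ℝ := Eop J ε (fun y => U y t₀) x₀ - Vt x₀ t₀ - (K + δ) with hddef
    have hψd : HasDerivAt ψ (K + δ) t₀ := by
      have h1 : HasDerivAt (fun s : ℝ => K * s) K t₀ := by
        simpa using (hasDerivAt_id t₀).const_mul K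
      have h2 : HasDerivAt (fun s : ℝ => δ * (1 + s)) δ t₀ := by
        simpa using ((hasDerivAt_id t₀).const_add (1:ℝ)).const_mul δ
      exact h1.add h2
    have hfd : HasDerivWithinAt (fun s => U x₀ s - V x₀ s - ψ s) d (Icc (0:ℝ) T) t₀ :=
      ((hUeq x₀ hx₀Ω t₀ ht₀Ioc).sub (hVderiv x₀ t₀ ht₀Icc)).sub hψd.hasDerivWithinAt
    have hd_neg : d ≤ -δ := by
      have := hkey x₀ hx₀Ω t₀ ht₀Ioc
      simp only [hddef]
      linarith
    -- slope argument : derivative at first crossing is nonnegative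
    have hmono := hfd.mono (Icc_subset_Icc_right ht₀Icc.2)
    rw [hasDerivWithinAt_iff_tendsto_slope] at hmono
    rw [Icc_sdiff_right] at hmono
    haveI hne : (nhdsWithin t₀ (Ico (0:ℝ) t₀)).NeBot := by
      apply mem_closure_iff_nhdsWithin_neBot.mp
      rw [closure_Ico ht₀pos.ne]
      exact right_mem_Icc.2 ht₀pos.le
    have hge0 : 0 ≤ d := by
      refine ge_of_tendsto hmono ?_
      filter_upwards [eventually_mem_nhdsWithin] with s hs
      rw [slope_def_field]
      refine div_nonneg_iff.2 (Or.inr ⟨?_, ?_⟩)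
      · have h1 := hlt s hs x₀ hx₀cl
        linarith
      · linarith [hs.2]
    linarith
  -- conclude
  intro x hx t ht
  have h2 : ∀ δ > (0:ℝ), U x t - V x t ≤ K * T + δ * (1 + T) := by
    intro δ hδ
    have := (main δ hδ t ht x (subset_closure hx)).le
    have h3 : K * t ≤ K * T := mul_le_mul_of_nonneg_left ht.2 hK
    have h4 : δ * (1 + t) ≤ δ * (1 + T) := by
      apply mul_le_mul_of_nonneg_left _ hδ.le
      linarith [ht.2]
    linarith
  by_contra hcon
  push_neg at hcon
  have hT1 : (0:ℝ) < 1 + T := by linarith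
  set δ := (U x t - V x t - K * T) / (2 * (1 + T)) with hδdef
  have hδpos : 0 < δ := by
    apply div_pos _ (by linarith)
    linarith
  have hhalf : δ * (1 + T) = (U x t - V x t - K * T) / 2 := by
    rw [hδdef]
    field_simp
  have := h2 δ hδpos
  rw [hhalf] at this
  linarith

/-- Solutions of the rescaled nonlocal convolution Dirichlet problems `∂ₜu^ε = ℰ_ε u^ε`
uniformly approximate, at rate `ε^α`, the solution of the heat-type Dirichlet problem
`∂ₜv = (C(J)/2) Δv`. -/
theorem stmt11 (n : ℕ) (hn : 1 ≤ n)
    (J : EuclideanSpace ℝ (Fin n) → ℝ) (hJint : Integrable J)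
    (hJcs : HasCompactSupport J) (hJ0 : ∀ x, 0 ≤ J x) (hJeven : ∀ x, J (-x) = J x)
    (CJ : ℝ) (hCJ : 0 < CJ)
    (hJmom : ∀ i j : Fin n, ∫ x, J x * (x i * x j) = if i = j then CJ else 0)
    (α : ℝ) (hα : α ∈ Ioc (0:ℝ) 1) (H : ℝ) (hH : 0 ≤ H)
    (Ω : Set (EuclideanSpace ℝ (Fin n))) (hΩo : IsOpen Ω) (hΩb : Bornology.IsBounded Ω)
    (T : ℝ) (hT : 0 < T)
    (g : EuclideanSpace ℝ (Fin n) → ℝ → ℝ) (u₀ : EuclideanSpace ℝ (Fin n) → ℝ)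
    -- the solution ṽ of the heat-type problem
    (v : EuclideanSpace ℝ (Fin n) → ℝ → ℝ)
    (hvbdd : ∃ C, ∀ x t, |v x t| ≤ C)
    (hvcont : Continuous (fun p : EuclideanSpace ℝ (Fin n) × ℝ => v p.1 p.2))
    (vt : EuclideanSpace ℝ (Fin n) → ℝ → ℝ)
    (hvt : ∀ x, ∀ t ∈ Icc (0:ℝ) T, HasDerivWithinAt (fun s => v x s) (vt x t) (Icc (0:ℝ) T) t)
    (hvtcont : ∀ x, ContinuousOn (vt x) (Icc (0:ℝ) T))
    (hvC2 : ∀ t ∈ Icc (0:ℝ) T, ContDiff ℝ 2 (fun x => v x t))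
    (hvHolder : ∀ t ∈ Icc (0:ℝ) T, ∀ x y, ∀ i j : Fin n,
      |pd2 (fun z => v z t) x i j - pd2 (fun z => v z t) y i j| ≤ H * ‖x - y‖ ^ α)
    (hveq : ∀ x ∈ Ω, ∀ t ∈ Ioc (0:ℝ) T, vt x t = CJ / 2 * lap (fun y => v y t) x)
    (hvbc : ∀ x ∉ Ω, ∀ t ∈ Icc (0:ℝ) T, v x t = g x t)
    (hvic : ∀ x ∈ Ω, v x 0 = u₀ x)
    -- the solutions u^ε of the nonlocal problems
    (uε : ℝ → EuclideanSpace ℝ (Fin n) → ℝ → ℝ)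
    (huεbdd : ∀ ε ∈ Ioc (0:ℝ) 1, ∃ C, ∀ x t, |uε ε x t| ≤ C)
    (huεcont : ∀ ε ∈ Ioc (0:ℝ) 1,
      ContinuousOn (fun p : EuclideanSpace ℝ (Fin n) × ℝ => uε ε p.1 p.2)
        (closure Ω ×ˢ Icc (0:ℝ) T))
    (huεeq : ∀ ε ∈ Ioc (0:ℝ) 1, ∀ x ∈ Ω, ∀ t ∈ Ioc (0:ℝ) T,
      HasDerivWithinAt (fun s => uε ε x s)
        (Eop J ε (fun y => uε ε y t) x) (Icc (0:ℝ) T) t)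
    (huεbc : ∀ ε ∈ Ioc (0:ℝ) 1, ∀ x ∉ Ω, ∀ t ∈ Icc (0:ℝ) T, uε ε x t = g x t)
    (huεic : ∀ ε ∈ Ioc (0:ℝ) 1, ∀ x ∈ Ω, uε ε x 0 = u₀ x) :
    ∃ c : ℝ, ∀ ε ∈ Ioc (0:ℝ) 1, ∀ x ∈ Ω, ∀ t ∈ Icc (0:ℝ) T,
      |uε ε x t - v x t| ≤ c * ε ^ α := by
  classical
  obtain ⟨Cv, hCv⟩ := hvbdd
  have hΩc : IsCompact (closure Ω) := hΩb.isCompact_closure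
  obtain ⟨R₀, hR₀⟩ := hJcs.isBounded.subset_closedBall 0
  set R : ℝ := max R₀ 1 with hRdef
  have hR : 0 < R := lt_of_lt_of_le one_pos (le_max_right _ _)
  have hsupp : tsupport J ⊆ Metric.closedBall 0 R :=
    hR₀.trans (Metric.closedBall_subset_closedBall (le_max_left _ _))
  have hα0 : 0 < α := hα.1
  set K : ℝ := H * (n:ℝ)^2 * (R^2 * R^α) * ∫ y, J y with hKdef
  have hIJ0 : (0:ℝ) ≤ ∫ y, J y := integral_nonneg hJ0
  have hK0 : 0 ≤ K := by
    rw [hKdef]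
    have : (0:ℝ) ≤ R ^ α := (Real.rpow_pos_of_pos hR α).le
    positivity
  refine ⟨K * T, ?_⟩
  intro ε hε x hx t ht
  obtain ⟨Cu, hCu⟩ := huεbdd ε hε
  have hε0 : 0 < ε := hε.1
  have hεα : (0:ℝ) < ε ^ α := Real.rpow_pos_of_pos hε0 α
  have hKε0 : 0 ≤ K * ε ^ α := mul_nonneg hK0 hεα.le
  -- slice continuity of v
  have hvslice : ∀ s : ℝ, Continuous (fun z => v z s) := fun s =>
    hvcont.comp (continuous_id.prodMk continuous_const)
  -- measurability of uε(·, s) for s ∈ [0, T]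
  have hMeasU : ∀ s ∈ Icc (0:ℝ) T, Measurable (fun z => uε ε z s) := by
    intro s hs
    apply measurable_of_measurable_union_cover Ω Ωᶜ hΩo.measurableSet
      hΩo.measurableSet.compl (by rw [union_compl_self])
    · have hc : ContinuousOn (fun z => uε ε z s) Ω := by
        have h1 : ContinuousOn (fun z => uε ε z s) (closure Ω) :=
          (huεcont ε hε).comp
            ((continuous_id.prodMk continuous_const).continuousOn :
              ContinuousOn (fun z : EuclideanSpace ℝ (Fin n) => (z, s)) (closure Ω))
            (fun z hz => mk_mem_prod hz hs)
        exact h1.mono subset_closure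
      exact (continuousOn_iff_continuous_restrict.1 hc).measurable
    · have heq : (fun a : ↥(Ωᶜ) => uε ε (a : EuclideanSpace ℝ (Fin n)) s)
          = fun a : ↥(Ωᶜ) => v (a : EuclideanSpace ℝ (Fin n)) s := by
        funext a
        rw [huεbc ε hε a a.2 s hs, ← hvbc a a.2 s hs]
      rw [heq]
      exact ((hvslice s).comp continuous_subtype_val).measurable
  -- integrability of the nonlocal integrands
  have hUint : ∀ s ∈ Ioc (0:ℝ) T, ∀ z ∈ Ω,
      Integrable (fun y => J y * (uε ε (z - ε • y) s - uε ε z s)) := by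
    intro s hs z _
    have hm : Measurable fun w => uε ε w s := hMeasU s ⟨hs.1.le, hs.2⟩
    have hshift : Measurable fun y : EuclideanSpace ℝ (Fin n) => uε ε (z - ε • y) s :=
      hm.comp (continuous_const.sub (continuous_id.const_smul ε)).measurable
    refine Integrable.mono' (hJint.mul_const (2 * Cu))
      (hJint.aestronglyMeasurable.mul
        ((hshift.sub measurable_const).aestronglyMeasurable))
      (ae_of_all _ fun y => ?_)
    rw [norm_mul, Real.norm_eq_abs, Real.norm_eq_abs, abs_of_nonneg (hJ0 y)]
    apply mul_le_mul_of_nonneg_left _ (hJ0 y)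
    calc |uε ε (z - ε • y) s - uε ε z s|
        ≤ |uε ε (z - ε • y) s| + |uε ε z s| := abs_sub _ _
      _ ≤ Cu + Cu := add_le_add (hCu _ _) (hCu _ _)
      _ = 2 * Cu := by ring
  have hVint : ∀ s ∈ Ioc (0:ℝ) T, ∀ z ∈ Ω,
      Integrable (fun y => J y * (v (z - ε • y) s - v z s)) := by
    intro s _ z _
    refine Integrable.mono' (hJint.mul_const (2 * Cv))
      (hJint.aestronglyMeasurable.mul
        ((((hvslice s).comp
          (continuous_const.sub (continuous_id.const_smul ε))).sub
            continuous_const).aestronglyMeasurable))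
      (ae_of_all _ fun y => ?_)
    rw [norm_mul, Real.norm_eq_abs, Real.norm_eq_abs, abs_of_nonneg (hJ0 y)]
    apply mul_le_mul_of_nonneg_left _ (hJ0 y)
    calc |v (z - ε • y) s - v z s|
        ≤ |v (z - ε • y) s| + |v z s| := abs_sub _ _
      _ ≤ Cv + Cv := add_le_add (hCv _ _) (hCv _ _)
      _ = 2 * Cv := by ring
  -- consistency estimate
  have hconsist : ∀ z ∈ Ω, ∀ s ∈ Ioc (0:ℝ) T,
      |Eop J ε (fun y => v y s) z - vt z s| ≤ K * ε ^ α := by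
    intro z hz s hs
    have hsIcc : s ∈ Icc (0:ℝ) T := ⟨hs.1.le, hs.2⟩
    have h1 := consistency hJint hJ0 hJeven hR hsupp hJmom hα0 hH
      (hvC2 s hsIcc) (fun w => hCv w s) (hvHolder s hsIcc) hε0 z
    rw [hveq z hz s hs, hKdef]
    exact h1
  -- one-sided estimate for uε - v
  have h1 : uε ε x t - v x t ≤ (K * ε ^ α) * T := by
    refine oneside J hJ0 ε Ω hΩc T hT (K * ε ^ α) hKε0 (uε ε) v vt
      (huεcont ε hε) hvcont (huεeq ε hε) hvt
      (fun z hz s hs => by linarith [(abs_le.1 (hconsist z hz s hs)).2])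
      (fun z hz s hs => by rw [huεbc ε hε z hz s hs, hvbc z hz s hs])
      (fun z hz => by rw [huεic ε hε z hz, hvic z hz])
      hUint hVint x hx t ht
  -- one-sided estimate for v - uε via negation
  have hEopneg : ∀ (w : EuclideanSpace ℝ (Fin n) → ℝ) (z : EuclideanSpace ℝ (Fin n)),
      Eop J ε (fun y => -(w y)) z = -(Eop J ε w z) := by
    intro w z
    simp only [Eop]
    rw [show (fun y => J y * (-(w (z - ε • y)) - -(w z)))
        = fun y => -(J y * (w (z - ε • y) - w z)) from funext fun y => by ring,
      integral_neg]
    ring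
  have h2 : (-(uε ε x t)) - (-(v x t)) ≤ (K * ε ^ α) * T := by
    refine oneside J hJ0 ε Ω hΩc T hT (K * ε ^ α) hKε0
      (fun z s => -(uε ε z s)) (fun z s => -(v z s)) (fun z s => -(vt z s))
      (huεcont ε hε).neg hvcont.neg
      (fun z hz s hs => by
        have := (huεeq ε hε z hz s hs).neg
        rw [show Eop J ε (fun y => -(uε ε y s)) z = -(Eop J ε (fun y => uε ε y s) z)
          from hEopneg _ z]
        exact this)
      (fun z s hs => (hvt z s hs).neg)
      (fun z hz s hs => by
        show Eop J ε (fun y => -(v y s)) z ≤ -(vt z s) + K * ε ^ α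
        rw [hEopneg (fun y => v y s) z]
        linarith [(abs_le.1 (hconsist z hz s hs)).1])
      (fun z hz s hs => by
        show -(uε ε z s) = -(v z s)
        rw [huεbc ε hε z hz s hs, hvbc z hz s hs])
      (fun z hz => by
        show -(uε ε z 0) = -(v z 0)
        rw [huεic ε hε z hz, hvic z hz])
      (fun s hs z hz => by
        have h3 := (hUint s hs z hz).neg
        refine h3.congr (ae_of_all _ fun y => by simp only [Pi.neg_apply]; ring)
        )
      (fun s hs z hz => by
        have h3 := (hVint s hs z hz).neg
        refine h3.congr (ae_of_all _ fun y => by simp only [Pi.neg_apply]; ring)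
        )
      x hx t ht
  have habs : |uε ε x t - v x t| ≤ (K * ε ^ α) * T := by
    rw [abs_sub_le_iff]
    constructor
    · linarith
    · linarith
  calc |uε ε x t - v x t| ≤ (K * ε ^ α) * T := habs
    _ = K * T * ε ^ α := by ring
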